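/- Let Ω be a compact Hausdorff extremally disconnected space, let (e_n)_{n∈ℕ} be a sequence in C(Ω;ℝ) and e ∈ C(Ω;ℝ). Then the following are equivalent: (a) (e_n) order-converges to e, i.e., there is a net (f_i)_{i∈I} in C(Ω;ℝ) decreasing to 0 such that for every i ∈ I there is n_i ∈ ℕ with |e_n − e| ≤ f_i for all n ≥ n_i; (b) (e_n) is bounded in the supremum norm and there is a residual set D ⊆ Ω such that lim_{n→∞} e_n(ω) = e(ω) for every ω ∈ D. -/
import Mathlib


open Filter

/-- A net in `C(Ω;ℝ)` decreases to `0`: it is antitone, nonnegative, and `0` is the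
greatest lower bound of its range. -/
def DecreasesToZero {Ω : Type*} [TopologicalSpace Ω] {I : Type*} [Preorder I]
    (f : I → C(Ω, ℝ)) : Prop :=
  (∀ i j : I, i ≤ j → 0 ≤ f j ∧ f j ≤ f i) ∧ IsGLB (Set.range f) 0

/-- The sequence `e` order-converges to `e₀` in `C(Ω;ℝ)`: some net decreasing to `0`
eventually dominates `|e n − e₀|`. -/
def OrderTendstoSeq {Ω : Type*} [TopologicalSpace Ω]
    (e : ℕ → C(Ω, ℝ)) (e₀ : C(Ω, ℝ)) : Prop :=
  ∃ (I : Type) (pre : Preorder I),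
    IsDirected I (fun i j => pre.le i j) ∧ Nonempty I ∧
    ∃ f : I → C(Ω, ℝ), @DecreasesToZero Ω _ I pre f ∧
      ∀ i : I, ∃ n₀ : ℕ, ∀ n : ℕ, n₀ ≤ n → |e n - e₀| ≤ f i

/-- Auxiliary: the infimum of `H m k` over `m, k ≤ N`. -/
noncomputable def tailInfAux {Ω : Type*} [TopologicalSpace Ω] (H : ℕ → ℕ → C(Ω, ℝ)) (N : ℕ) :
    C(Ω, ℝ) :=
  ((Finset.range (N + 1)) ×ˢ (Finset.range (N + 1))).inf'
    ⟨(0, 0), by simp⟩ (fun p => H p.1 p.2)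

lemma tailInfAux_le {Ω : Type*} [TopologicalSpace Ω] (H : ℕ → ℕ → C(Ω, ℝ)) {m k N : ℕ}
    (hm : m ≤ N) (hk : k ≤ N) : tailInfAux H N ≤ H m k := by
  unfold tailInfAux
  exact Finset.inf'_le (fun p : ℕ × ℕ => H p.1 p.2) (b := (m, k)) (Finset.mem_product.2
    ⟨Finset.mem_range.2 (Nat.lt_succ_of_le hm), Finset.mem_range.2 (Nat.lt_succ_of_le hk)⟩)

lemma le_tailInfAux {Ω : Type*} [TopologicalSpace Ω] (H : ℕ → ℕ → C(Ω, ℝ)) {g : C(Ω, ℝ)} {N : ℕ}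
    (h : ∀ m k, m ≤ N → k ≤ N → g ≤ H m k) : g ≤ tailInfAux H N := by
  refine Finset.le_inf' _ _ fun p hp => ?_
  obtain ⟨h1, h2⟩ := Finset.mem_product.1 hp
  exact h p.1 p.2 (Nat.lt_succ_iff.1 (Finset.mem_range.1 h1))
    (Nat.lt_succ_iff.1 (Finset.mem_range.1 h2))

/-- On a compact Hausdorff extremally disconnected space, a sequence in
`C(Ω;ℝ)` order-converges to `e₀` if and only if it is norm-bounded and converges
pointwise to `e₀` on a residual set. -/
theorem orderTendsto_iff_residual_pointwise {Ω : Type*} [TopologicalSpace Ω]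
    [CompactSpace Ω] [T2Space Ω] [ExtremallyDisconnected Ω]
    (e : ℕ → C(Ω, ℝ)) (e₀ : C(Ω, ℝ)) :
    OrderTendstoSeq e e₀ ↔
      (∃ C : ℝ, ∀ n : ℕ, ‖e n‖ ≤ C) ∧
        ∃ D ∈ residual Ω, ∀ ω ∈ D,
          Tendsto (fun n => e n ω) atTop (nhds (e₀ ω)) := by
  constructor
  · -- forward direction
    rintro ⟨I, pre, hdir, hne, f, ⟨hmono, hglb⟩, hdom⟩
    letI : Preorder I := pre
    obtain ⟨i₀⟩ := hne
    have hf0 : ∀ i : I, (0 : C(Ω, ℝ)) ≤ f i := fun i => (hmono i i le_rfl).1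
    constructor
    · -- norm boundedness
      obtain ⟨n₀, hn₀⟩ := hdom i₀
      refine ⟨(Finset.range n₀).sum (fun j => ‖e j‖) + (‖e₀‖ + ‖f i₀‖), fun n => ?_⟩
      by_cases hn : n < n₀
      · have h1 : ‖e n‖ ≤ (Finset.range n₀).sum (fun j => ‖e j‖) :=
          Finset.single_le_sum (fun j _ => norm_nonneg (e j)) (Finset.mem_range.2 hn)
        have h2 : (0 : ℝ) ≤ ‖e₀‖ + ‖f i₀‖ := add_nonneg (norm_nonneg _) (norm_nonneg _)
        linarith
      · push_neg at hn
        have hle : ‖e n - e₀‖ ≤ ‖f i₀‖ := by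
          refine (ContinuousMap.norm_le _ (norm_nonneg _)).2 fun ω => ?_
          have h1 : |e n - e₀| ω ≤ f i₀ ω := ContinuousMap.le_def.1 (hn₀ n hn) ω
          rw [ContinuousMap.abs_apply] at h1
          calc ‖(e n - e₀) ω‖ = |(e n - e₀) ω| := Real.norm_eq_abs _
            _ ≤ f i₀ ω := h1
            _ ≤ ‖f i₀ ω‖ := le_abs_self _
            _ ≤ ‖f i₀‖ := ContinuousMap.norm_coe_le_norm _ _
        have h3 : ‖e n‖ ≤ ‖e n - e₀‖ + ‖e₀‖ := by
          calc ‖e n‖ = ‖(e n - e₀) + e₀‖ := by ring_nf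
            _ ≤ ‖e n - e₀‖ + ‖e₀‖ := norm_add_le _ _
        have h4 : (0 : ℝ) ≤ (Finset.range n₀).sum (fun j => ‖e j‖) :=
          Finset.sum_nonneg fun j _ => norm_nonneg (e j)
        linarith
    · -- residual pointwise convergence
      set W : ℕ → Set Ω := fun k => ⋃ i : I, {ω | f i ω < 1 / (k + 1 : ℝ)} with hW
      have hWopen : ∀ k, IsOpen (W k) := fun k =>
        isOpen_iUnion fun i => isOpen_lt (f i).continuous continuous_const
      have hWdense : ∀ k, Dense (W k) := by
        intro k
        by_contra hnd
        rw [dense_iff_closure_eq] at hnd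
        have : ∃ ω₀, ω₀ ∉ closure (W k) := by
          by_contra h
          push_neg at h
          exact hnd (Set.eq_univ_of_forall h)
        obtain ⟨ω₀, hω₀⟩ := this
        set V : Set Ω := (closure (W k))ᶜ with hV
        have hVopen : IsOpen V := isOpen_compl_iff.2 isClosed_closure
        have hω₀V : ω₀ ∈ V := hω₀
        set K : Set Ω := closure V with hKdef
        have hKclopen : IsClopen K :=
          ⟨isClosed_closure, ExtremallyDisconnected.open_closure V hVopen⟩
        set g : C(Ω, ℝ) := ⟨K.indicator (fun _ => 1 / (k + 1 : ℝ)),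
          continuous_indicator (by simp [hKclopen.frontier_eq]) continuous_const.continuousOn⟩
          with hg
        have hglow : g ∈ lowerBounds (Set.range f) := by
          rintro _ ⟨i, rfl⟩
          rw [ContinuousMap.le_def]
          intro ω
          by_cases hωK : ω ∈ K
          · have hsub : V ⊆ {x | 1 / (k + 1 : ℝ) ≤ f i x} := by
              intro x hx
              have hxW : x ∉ W k := fun hmem => hx (subset_closure hmem)
              have : ¬ f i x < 1 / (k + 1 : ℝ) := by
                intro hlt
                exact hxW (Set.mem_iUnion.2 ⟨i, hlt⟩)
              exact le_of_not_gt this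
            have hclosed : IsClosed {x | 1 / (k + 1 : ℝ) ≤ f i x} :=
              isClosed_le continuous_const (f i).continuous
            have : ω ∈ {x | 1 / (k + 1 : ℝ) ≤ f i x} :=
              closure_minimal hsub hclosed hωK
            calc g ω = 1 / (k + 1 : ℝ) := by
                  simp [hg, Set.indicator_of_mem hωK]
              _ ≤ f i ω := this
          · have : g ω = 0 := by simp [hg, Set.indicator_of_notMem hωK]
            rw [this]
            exact ContinuousMap.le_def.1 (hf0 i) ω
        have hle0 : g ≤ 0 := hglb.2 hglow
        have hω₀K : ω₀ ∈ K := subset_closure hω₀V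
        have h1 : g ω₀ = 1 / (k + 1 : ℝ) := by simp [hg, Set.indicator_of_mem hω₀K]
        have h2 : g ω₀ ≤ 0 := ContinuousMap.le_def.1 hle0 ω₀
        have h3 : (0 : ℝ) < 1 / (k + 1 : ℝ) := by positivity
        rw [h1] at h2
        linarith
      refine ⟨⋂ k, W k, countable_iInter_mem.2 fun k =>
        residual_of_dense_open (hWopen k) (hWdense k), fun ω hω => ?_⟩
      rw [Metric.tendsto_atTop]
      intro ε hε
      obtain ⟨k, hk⟩ := exists_nat_one_div_lt hε
      have hωW : ω ∈ W k := Set.mem_iInter.1 hω k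
      obtain ⟨i, hi⟩ := Set.mem_iUnion.1 hωW
      obtain ⟨n₀, hn₀⟩ := hdom i
      refine ⟨n₀, fun n hn => ?_⟩
      have h1 : |e n - e₀| ω ≤ f i ω := ContinuousMap.le_def.1 (hn₀ n hn) ω
      rw [ContinuousMap.abs_apply, ContinuousMap.sub_apply] at h1
      calc dist (e n ω) (e₀ ω) = |e n ω - e₀ ω| := Real.dist_eq _ _
        _ ≤ f i ω := h1
        _ < 1 / (k + 1 : ℝ) := hi
        _ < ε := hk
  · -- backward direction
    rintro ⟨⟨C, hC⟩, D, hD, hDconv⟩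
    set M : ℝ := C + ‖e₀‖ with hMdef
    have hM : ∀ n ω, |e n ω - e₀ ω| ≤ M := by
      intro n ω
      calc |e n ω - e₀ ω| = ‖(e n - e₀) ω‖ := by
            rw [ContinuousMap.sub_apply, Real.norm_eq_abs]
        _ ≤ ‖e n - e₀‖ := ContinuousMap.norm_coe_le_norm _ _
        _ ≤ ‖e n‖ + ‖e₀‖ := norm_sub_le _ _
        _ ≤ C + ‖e₀‖ := by linarith [hC n]
    have hM0 : (0 : ℝ) ≤ M :=
      add_nonneg (le_trans (norm_nonneg (e 0)) (hC 0)) (norm_nonneg _)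
    have hεpos : ∀ k : ℕ, (0 : ℝ) < 1 / (k + 1 : ℝ) := fun k => by positivity
    set U : ℕ → ℕ → Set Ω := fun m k =>
      ⋃ n : ℕ, ⋃ (_ : m ≤ n), {ω | 1 / (k + 1 : ℝ) < |e n ω - e₀ ω|} with hUdef
    have hUopen : ∀ m k, IsOpen (U m k) := fun m k =>
      isOpen_iUnion fun n => isOpen_iUnion fun _ =>
        isOpen_lt continuous_const (((e n).continuous.sub e₀.continuous).abs)
    have hUmem : ∀ m k ω, ω ∈ U m k ↔ ∃ n, m ≤ n ∧ 1 / (k + 1 : ℝ) < |e n ω - e₀ ω| := by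
      intro m k ω
      simp [hUdef, Set.mem_iUnion]
    set K : ℕ → ℕ → Set Ω := fun m k => closure (U m k) with hKdef
    have hKclopen : ∀ m k, IsClopen (K m k) := fun m k =>
      ⟨isClosed_closure, ExtremallyDisconnected.open_closure _ (hUopen m k)⟩
    set χ : ℕ → ℕ → C(Ω, ℝ) := fun m k =>
      ⟨(K m k).indicator fun _ => M,
        continuous_indicator (by simp [(hKclopen m k).frontier_eq])
          continuous_const.continuousOn⟩ with hχdef
    set H : ℕ → ℕ → C(Ω, ℝ) := fun m k =>
      ContinuousMap.const Ω (1 / (k + 1 : ℝ)) + χ m k with hHdef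
    have hHmem : ∀ m k ω, ω ∈ K m k → H m k ω = 1 / (k + 1 : ℝ) + M := by
      intro m k ω hω
      simp [hHdef, hχdef, Set.indicator_of_mem hω]
    have hHnotmem : ∀ m k ω, ω ∉ K m k → H m k ω = 1 / (k + 1 : ℝ) := by
      intro m k ω hω
      simp [hHdef, hχdef, Set.indicator_of_notMem hω]
    have hH0 : ∀ m k, (0 : C(Ω, ℝ)) ≤ H m k := by
      intro m k
      rw [ContinuousMap.le_def]
      intro ω
      rw [ContinuousMap.zero_apply]
      by_cases hω : ω ∈ K m k
      · rw [hHmem m k ω hω]; linarith [hεpos k]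
      · rw [hHnotmem m k ω hω]; linarith [hεpos k]
    have hHdom : ∀ m k n, m ≤ n → |e n - e₀| ≤ H m k := by
      intro m k n hn
      rw [ContinuousMap.le_def]
      intro ω
      rw [ContinuousMap.abs_apply, ContinuousMap.sub_apply]
      by_cases hω : ω ∈ K m k
      · rw [hHmem m k ω hω]
        linarith [hM n ω, hεpos k]
      · rw [hHnotmem m k ω hω]
        have hωU : ω ∉ U m k := fun h => hω (subset_closure h)
        rw [hUmem] at hωU
        push_neg at hωU
        exact hωU n hn
    set f : ℕ → C(Ω, ℝ) := tailInfAux H with hfdef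
    have hf_le : ∀ m k N, m ≤ N → k ≤ N → f N ≤ H m k := by
      intro m k N hm hk
      exact tailInfAux_le H hm hk
    have hf0 : ∀ N, (0 : C(Ω, ℝ)) ≤ f N := by
      intro N
      exact le_tailInfAux H fun m k _ _ => hH0 m k
    have hf_anti : ∀ N N' : ℕ, N ≤ N' → f N' ≤ f N := by
      intro N N' hNN
      exact le_tailInfAux H fun m k hm hk =>
        hf_le m k N' (le_trans hm hNN) (le_trans hk hNN)
    have hftail : ∀ N n, N ≤ n → |e n - e₀| ≤ f N := by
      intro N n hn
      exact le_tailInfAux H fun m k hm _ => hHdom m k n (le_trans hm hn)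
    have hglb : IsGLB (Set.range f) 0 := by
      constructor
      · rintro _ ⟨N, rfl⟩
        exact hf0 N
      · intro b hb
        have key : ∀ k : ℕ, ∀ ω : Ω, b ω ≤ 1 / (k + 1 : ℝ) := by
          intro k
          set S : Set Ω := {ω | b ω ≤ 1 / (k + 1 : ℝ)} with hSdef
          have hSclosed : IsClosed S := isClosed_le b.continuous continuous_const
          have hGres : (⋂ m : ℕ, (U m k ∪ (K m k)ᶜ)) ∈ residual Ω := by
            refine countable_iInter_mem.2 fun m => residual_of_dense_open ?_ ?_
            · exact (hUopen m k).union (isOpen_compl_iff.2 isClosed_closure)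
            · intro x
              by_cases hx : x ∈ K m k
              · exact closure_mono Set.subset_union_left hx
              · exact subset_closure (Set.mem_union_right _ hx)
          have hRsub : D ∩ (⋂ m : ℕ, (U m k ∪ (K m k)ᶜ)) ⊆ S := by
            rintro ω ⟨hωD, hωG⟩
            obtain ⟨m, hm⟩ := Metric.tendsto_atTop.1 (hDconv ω hωD) (1 / (k + 1 : ℝ)) (hεpos k)
            have hωU : ω ∉ U m k := by
              rw [hUmem]
              push_neg
              intro n hn
              have := hm n hn
              rw [Real.dist_eq] at this
              linarith
            have hωK : ω ∉ K m k := by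
              have hmem := Set.mem_iInter.1 hωG m
              rcases hmem with h | h
              · exact absurd h hωU
              · exact h
            have h1 : b ω ≤ f (max m k) ω := ContinuousMap.le_def.1 (hb ⟨max m k, rfl⟩) ω
            have h2 : f (max m k) ω ≤ H m k ω :=
              ContinuousMap.le_def.1 (hf_le m k (max m k) (le_max_left m k) (le_max_right m k)) ω
            rw [hHnotmem m k ω hωK] at h2
            exact le_trans h1 h2
          have hSdense : Dense S :=
            (dense_of_mem_residual (Filter.inter_mem hD hGres)).mono hRsub
          intro ω
          have : ω ∈ closure S := hSdense ω
          rwa [hSclosed.closure_eq] at this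
        rw [ContinuousMap.le_def]
        intro ω
        rw [ContinuousMap.zero_apply]
        refine le_of_forall_pos_le_add fun ε hε => ?_
        obtain ⟨k, hk⟩ := exists_nat_one_div_lt hε
        have := key k ω
        linarith
    refine ⟨ℕ, inferInstance, ⟨fun a b => ⟨max a b, le_max_left a b, le_max_right a b⟩⟩, ⟨0⟩,
      f, ⟨fun i j hij => ⟨hf0 j, hf_anti i j hij⟩, hglb⟩, fun N => ⟨N, fun n hn => hftail N n hn⟩⟩
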